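/- The Wasserstein distance of order p between Markov kernels, defined for kernels M, N : X → Y between metric measure spaces by W_p(M,N) := inf over couplings Π of M and N of (∫_{X×Y×Y} d_Y(y,y')^p Π(dy,dy'|x) μ_X(dx))^{1/p}, satisfies W_p(M,M) = 0 and the triangle inequality W_p(M_1,M_3) ≤ W_p(M_1,M_2) + W_p(M_2,M_3) for all kernels M_1, M_2, M_3 : X → Y and all 1 ≤ p < ∞. -/

import Mathlib

open ProbabilityTheory MeasureTheory ENNReal

/-- The set of couplings of two Markov kernels `M N : X → Y`: kernels into `Y × Y` whose
marginals are `M` and `N`. -/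
def kernelCouplings {X Y : Type*} [MeasurableSpace X] [MeasurableSpace Y]
    (M N : Kernel X Y) : Set (Kernel X (Y × Y)) :=
  {Pi | IsMarkovKernel Pi ∧ Pi.map Prod.fst = M ∧ Pi.map Prod.snd = N}

/-- The Wasserstein distance of order `p` between Markov kernels `M N : X → Y`, relative to
a base measure `μX` on `X` and a `[0,∞]`-valued metric `dY` on `Y`. -/
noncomputable def kernelWasserstein {X Y : Type*} [MeasurableSpace X] [MeasurableSpace Y]
    (μX : Measure X) (dY : Y → Y → ℝ≥0∞) (p : ℝ) (M N : Kernel X Y) : ℝ≥0∞ :=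
  ⨅ Pi ∈ kernelCouplings M N,
    (∫⁻ x, ∫⁻ q, dY q.1 q.2 ^ p ∂(Pi x) ∂μX) ^ (1 / p)

/-- Gluing lemma: from a coupling of `M₁, M₂` and a coupling of `M₂, M₃`, we get a coupling of
`M₁, M₃` whose cost is bounded via Minkowski's inequality. -/
lemma kernelWasserstein_glue {X Y : Type*} [MeasurableSpace X] [MeasurableSpace Y]
    [StandardBorelSpace Y]
    (μX : Measure X) [SigmaFinite μX]
    (dY : Y → Y → ℝ≥0∞)
    (hdtri : ∀ y y' y'', dY y y'' ≤ dY y y' + dY y' y'')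
    (hdmeas : Measurable (fun q : Y × Y => dY q.1 q.2))
    (p : ℝ) (hp : 1 ≤ p)
    (M₁ M₂ M₃ : Kernel X Y)
    [IsMarkovKernel M₁] [IsMarkovKernel M₂] [IsMarkovKernel M₃]
    (Pi : Kernel X (Y × Y)) (hPi : Pi ∈ kernelCouplings M₁ M₂)
    (Ka : Kernel X (Y × Y)) (hKa : Ka ∈ kernelCouplings M₂ M₃) :
    ∃ Θ ∈ kernelCouplings M₁ M₃,
      (∫⁻ x, ∫⁻ q, dY q.1 q.2 ^ p ∂(Θ x) ∂μX) ^ (1 / p) ≤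
      (∫⁻ x, ∫⁻ q, dY q.1 q.2 ^ p ∂(Pi x) ∂μX) ^ (1 / p) +
      (∫⁻ x, ∫⁻ q, dY q.1 q.2 ^ p ∂(Ka x) ∂μX) ^ (1 / p) := by
  obtain ⟨hPiM, hPi1, hPi2⟩ := hPi
  obtain ⟨hKaM, hKa1, hKa2⟩ := hKa
  haveI := hPiM; haveI := hKaM
  have hp0 : 0 < p := lt_of_lt_of_le one_pos hp
  rcases isEmpty_or_nonempty Y with hY | hY
  · -- degenerate case: `Y` is empty, hence so is `X` and everything vanishes
    haveI : IsEmpty X := by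
      by_contra h
      rw [not_isEmpty_iff] at h
      obtain ⟨x⟩ := h
      have := (hPiM.isProbabilityMeasure x).measure_univ
      rw [Set.eq_empty_of_isEmpty (Set.univ : Set (Y × Y))] at this
      simp at this
    have hμ : μX = 0 := by
      ext s hs
      rw [Set.eq_empty_of_isEmpty s]
      simp
    refine ⟨Pi, ⟨hPiM, hPi1, ?_⟩, ?_⟩
    · rw [hPi2]
      exact Kernel.ext fun x => (IsEmpty.false x).elim
    · rw [hμ]
      simp [ENNReal.zero_rpow_of_pos (by positivity : (0:ℝ) < 1/p)]
  -- the swapped coupling of M₂ and M₁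
  set Ps : Kernel X (Y × Y) := Pi.map Prod.swap with hPs
  haveI : IsMarkovKernel Ps := Kernel.IsMarkovKernel.map _ measurable_swap
  -- swap formula for lintegrals
  have hswap : ∀ x (g : Y × Y → ℝ≥0∞), Measurable g →
      ∫⁻ q, g q ∂(Ps x) = ∫⁻ q, g (q.2, q.1) ∂(Pi x) := by
    intro x g hg
    rw [hPs, Kernel.lintegral_map _ measurable_swap _ hg]
    rfl
  -- first marginal of Ps is M₂
  have hfst : Ps.fst = M₂ := by
    refine Kernel.ext_fun fun x f hf => ?_
    rw [Kernel.fst_eq, Kernel.lintegral_map _ measurable_fst _ hf,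
      hswap x (fun q => f q.1) (hf.comp measurable_fst), ← hPi2,
      Kernel.lintegral_map _ measurable_snd _ hf]
  have hKafst : Ka.fst = M₂ := by rw [Kernel.fst_eq, hKa1]
  -- conditional kernels
  set L : Kernel (X × Y) Y := Ps.condKernel with hLdef
  set R : Kernel (X × Y) Y := Ka.condKernel with hRdef
  haveI : Ps.IsCondKernel L := by rw [hLdef]; infer_instance
  haveI : Ka.IsCondKernel R := by rw [hRdef]; infer_instance
  haveI : IsMarkovKernel L := by rw [hLdef]; infer_instance
  haveI : IsMarkovKernel R := by rw [hRdef]; infer_instance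
  have hL : Ps.fst ⊗ₖ L = Ps := Ps.disintegrate _
  have hR : Ka.fst ⊗ₖ R = Ka := Ka.disintegrate _
  -- the glued kernel
  set G : Kernel X (Y × Y × Y) := M₂ ⊗ₖ (L ×ₖ R) with hGdef
  haveI : IsMarkovKernel G := by rw [hGdef]; infer_instance
  -- evaluation of integrals against G that depend only on (y₂, y₁)
  have hA : ∀ x (g : Y × Y → ℝ≥0∞), Measurable g →
      ∫⁻ r, g (r.1, r.2.1) ∂(G x) = ∫⁻ q, g q ∂(Ps x) := by
    intro x g hg
    have hg' : Measurable fun r : Y × Y × Y => g (r.1, r.2.1) :=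
      hg.comp (measurable_fst.prodMk (measurable_fst.comp measurable_snd))
    rw [hGdef, Kernel.lintegral_compProd _ _ _ hg']
    have : ∀ b : Y, ∫⁻ c, g (b, c.1) ∂((L ×ₖ R) (x, b)) = ∫⁻ c, g (b, c) ∂(L (x, b)) := by
      intro b
      rw [Kernel.lintegral_prod _ _ _
        (show Measurable fun c : Y × Y => g (b, c.1) from
          hg.comp (measurable_const.prodMk measurable_fst))]
      simp
    simp_rw [this]
    conv_rhs => rw [← hL, Kernel.lintegral_compProd _ _ _ hg]
    rw [hfst]
  -- evaluation of integrals against G that depend only on (y₂, y₃)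
  have hB : ∀ x (g : Y × Y → ℝ≥0∞), Measurable g →
      ∫⁻ r, g (r.1, r.2.2) ∂(G x) = ∫⁻ q, g q ∂(Ka x) := by
    intro x g hg
    have hg' : Measurable fun r : Y × Y × Y => g (r.1, r.2.2) :=
      hg.comp (measurable_fst.prodMk (measurable_snd.comp measurable_snd))
    rw [hGdef, Kernel.lintegral_compProd _ _ _ hg']
    have : ∀ b : Y, ∫⁻ c, g (b, c.2) ∂((L ×ₖ R) (x, b)) = ∫⁻ c, g (b, c) ∂(R (x, b)) := by
      intro b
      rw [Kernel.lintegral_prod _ _ _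
        (show Measurable fun c : Y × Y => g (b, c.2) from
          hg.comp (measurable_const.prodMk measurable_snd))]
      simp
    simp_rw [this]
    conv_rhs => rw [← hR, Kernel.lintegral_compProd _ _ _ hg]
    rw [hKafst]
  -- the glued coupling of M₁ and M₃
  refine ⟨G.map Prod.snd, ⟨Kernel.IsMarkovKernel.map _ measurable_snd, ?_, ?_⟩, ?_⟩
  · -- first marginal is M₁
    refine Kernel.ext_fun fun x f hf => ?_
    rw [Kernel.lintegral_map _ measurable_fst _ hf,
      Kernel.lintegral_map _ measurable_snd _
        (show Measurable fun q : Y × Y => f q.1 from hf.comp measurable_fst)]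
    have : ∫⁻ r : Y × Y × Y, f r.2.1 ∂(G x) = ∫⁻ q, (fun q : Y × Y => f q.2) q ∂(Ps x) :=
      hA x _ (hf.comp measurable_snd)
    rw [this, hswap x (fun q => f q.2)
      (show Measurable fun q : Y × Y => f q.2 from hf.comp measurable_snd), ← hPi1,
      Kernel.lintegral_map _ measurable_fst _ hf]
  · -- second marginal is M₃
    refine Kernel.ext_fun fun x f hf => ?_
    rw [Kernel.lintegral_map _ measurable_snd _ hf,
      Kernel.lintegral_map _ measurable_snd _
        (show Measurable fun q : Y × Y => f q.2 from hf.comp measurable_snd)]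
    have : ∫⁻ r : Y × Y × Y, f r.2.2 ∂(G x) = ∫⁻ q, (fun q : Y × Y => f q.2) q ∂(Ka x) :=
      hB x _ (hf.comp measurable_snd)
    rw [this, ← hKa2, Kernel.lintegral_map _ measurable_snd _ hf]
  · -- cost bound via Minkowski
    haveI : SFinite μX := inferInstance
    have hmeasp : Measurable fun q : Y × Y => dY q.1 q.2 ^ p := hdmeas.pow_const p
    set ν : Measure (X × (Y × Y × Y)) := μX ⊗ₘ G with hν
    -- express the three costs as integrals over ν
    have hmF : Measurable fun z : X × (Y × Y × Y) => dY z.2.2.1 z.2.1 :=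
      hdmeas.comp ((measurable_fst.comp (measurable_snd.comp measurable_snd)).prodMk
        (measurable_fst.comp measurable_snd))
    have hmG : Measurable fun z : X × (Y × Y × Y) => dY z.2.1 z.2.2.2 :=
      hdmeas.comp ((measurable_fst.comp measurable_snd).prodMk
        (measurable_snd.comp (measurable_snd.comp measurable_snd)))
    have hmH : Measurable fun z : X × (Y × Y × Y) => dY z.2.2.1 z.2.2.2 ^ p :=
      (hdmeas.comp ((measurable_fst.comp (measurable_snd.comp measurable_snd)).prodMk
        (measurable_snd.comp (measurable_snd.comp measurable_snd)))).pow_const p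
    have hcostΘ : ∫⁻ x, ∫⁻ q, dY q.1 q.2 ^ p ∂((G.map Prod.snd) x) ∂μX
        = ∫⁻ z, dY z.2.2.1 z.2.2.2 ^ p ∂ν := by
      rw [hν, Measure.lintegral_compProd hmH]
      congr 1
      funext x
      rw [Kernel.lintegral_map _ measurable_snd _ hmeasp]
    have hcostPi : ∫⁻ z, dY z.2.2.1 z.2.1 ^ p ∂ν
        = ∫⁻ x, ∫⁻ q, dY q.1 q.2 ^ p ∂(Pi x) ∂μX := by
      rw [hν, Measure.lintegral_compProd (hmF.pow_const p)]
      congr 1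
      funext x
      have : ∫⁻ r : Y × Y × Y, dY r.2.1 r.1 ^ p ∂(G x)
          = ∫⁻ q, (fun q : Y × Y => dY q.2 q.1 ^ p) q ∂(Ps x) :=
        hA x _ ((hdmeas.comp (measurable_snd.prodMk measurable_fst)).pow_const p)
      rw [this, hswap x (fun q => dY q.2 q.1 ^ p)
        (show Measurable fun q : Y × Y => dY q.2 q.1 ^ p from
          (hdmeas.comp (measurable_snd.prodMk measurable_fst)).pow_const p)]
    have hcostKa : ∫⁻ z, dY z.2.1 z.2.2.2 ^ p ∂ν
        = ∫⁻ x, ∫⁻ q, dY q.1 q.2 ^ p ∂(Ka x) ∂μX := by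
      rw [hν, Measure.lintegral_compProd (hmG.pow_const p)]
      congr 1
      funext x
      exact hB x _ hmeasp
    rw [hcostΘ, ← hcostPi, ← hcostKa]
    calc (∫⁻ z, dY z.2.2.1 z.2.2.2 ^ p ∂ν) ^ (1 / p)
        ≤ (∫⁻ z, (dY z.2.2.1 z.2.1 + dY z.2.1 z.2.2.2) ^ p ∂ν) ^ (1 / p) := by
          refine ENNReal.rpow_le_rpow ?_ (by positivity)
          refine lintegral_mono fun z => ENNReal.rpow_le_rpow (hdtri _ _ _) hp0.le
      _ ≤ (∫⁻ z, dY z.2.2.1 z.2.1 ^ p ∂ν) ^ (1 / p)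
            + (∫⁻ z, dY z.2.1 z.2.2.2 ^ p ∂ν) ^ (1 / p) :=
          ENNReal.lintegral_Lp_add_le hmF.aemeasurable hmG.aemeasurable hp

/-- The Wasserstein distance of order `p` on Markov kernels between metric measure spaces
vanishes on the diagonal and satisfies the triangle inequality. -/
theorem kernelWasserstein_refl_and_triangle
    {X Y : Type*} [MeasurableSpace X] [MeasurableSpace Y] [StandardBorelSpace Y]
    (μX : Measure X) [SigmaFinite μX]
    (dY : Y → Y → ℝ≥0∞)
    (hd0 : ∀ y, dY y y = 0)
    (hdtri : ∀ y y' y'', dY y y'' ≤ dY y y' + dY y' y'')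
    (hdmeas : Measurable (fun q : Y × Y => dY q.1 q.2))
    (p : ℝ) (hp : 1 ≤ p)
    (M₁ M₂ M₃ : Kernel X Y)
    [IsMarkovKernel M₁] [IsMarkovKernel M₂] [IsMarkovKernel M₃] :
    kernelWasserstein μX dY p M₁ M₁ = 0 ∧
    kernelWasserstein μX dY p M₁ M₃ ≤
      kernelWasserstein μX dY p M₁ M₂ + kernelWasserstein μX dY p M₂ M₃ := by
  have hp0 : 0 < p := lt_of_lt_of_le one_pos hp
  have hmeasp : Measurable fun q : Y × Y => dY q.1 q.2 ^ p := hdmeas.pow_const p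
  constructor
  · -- reflexivity
    refine le_antisymm ?_ zero_le
    have hdiag : Measurable fun y : Y => (y, y) := measurable_id.prodMk measurable_id
    have hmem : M₁.map (fun y => (y, y)) ∈ kernelCouplings M₁ M₁ := by
      refine ⟨Kernel.IsMarkovKernel.map _ hdiag, ?_, ?_⟩
      · refine Kernel.ext_fun fun x f hf => ?_
        rw [Kernel.lintegral_map _ measurable_fst _ hf, Kernel.lintegral_map _ hdiag _
          (show Measurable fun q : Y × Y => f q.1 from hf.comp measurable_fst)]
      · refine Kernel.ext_fun fun x f hf => ?_
        rw [Kernel.lintegral_map _ measurable_snd _ hf, Kernel.lintegral_map _ hdiag _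
          (show Measurable fun q : Y × Y => f q.2 from hf.comp measurable_snd)]
    refine le_trans (iInf₂_le _ hmem) ?_
    have hz : ∀ x, ∫⁻ q, dY q.1 q.2 ^ p ∂((M₁.map fun y => (y, y)) x) = 0 := by
      intro x
      rw [Kernel.lintegral_map _ hdiag _ hmeasp]
      simp [hd0, ENNReal.zero_rpow_of_pos hp0]
    simp only [hz, lintegral_zero]
    rw [ENNReal.zero_rpow_of_pos (by positivity)]
  · -- triangle inequality
    conv_rhs => rw [kernelWasserstein, kernelWasserstein]
    rw [ENNReal.iInf_add]
    refine le_iInf fun Pi => ?_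
    rw [ENNReal.iInf_add]
    refine le_iInf fun hPi => ?_
    rw [ENNReal.add_iInf]
    refine le_iInf fun Ka => ?_
    rw [ENNReal.add_iInf]
    refine le_iInf fun hKa => ?_
    obtain ⟨Θ, hΘ, hbound⟩ :=
      kernelWasserstein_glue μX dY hdtri hdmeas p hp M₁ M₂ M₃ Pi hPi Ka hKa
    exact le_trans (iInf₂_le Θ hΘ) hbound
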